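/- Let H be a complex Hilbert space and let P_1, …, P_6 be orthogonal projections on H with P_6 ≤ P_1 ≤ P_5 and P_6 ≤ P_2 ≤ P_5 (this is a Hilbert representation of the poset a_8: an incomparable pair g_1, g_2 with one element g_5 above both and one element g_6 below both, together with two further mutually incomparable elements g_3, g_4). Let α_1, …, α_6 ∈ (0,1) satisfy α_1P_1 + ⋯ + α_6P_6 = I, and suppose the family (P_1, …, P_6) is irreducible. Then the representation is not essential; that is, either some P_i equals 0 or I, or P_g = P_h for some comparable pair g < h among {g_6 < g_1, g_6 < g_2, g_1 < g_5, g_2 < g_5}. -/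

import Mathlib

open scoped ComplexInnerProductSpace

section Stmt16Aux

variable {H : Type*} [NormedAddCommGroup H] [InnerProductSpace ℂ H]

private lemma aux_inner [CompleteSpace H] {P : H →L[ℂ] H} (hsa : IsSelfAdjoint P)
    (hid : ∀ y, P (P y) = P y) (x : H) :
    ⟪x, P x⟫ = ((‖P x‖ ^ 2 : ℝ) : ℂ) := by
  have h1 : ⟪x, P x⟫ = ⟪x, P (P x)⟫ := by rw [hid]
  rw [h1, ← ContinuousLinearMap.adjoint_inner_left, hsa.adjoint_eq,
    inner_self_eq_norm_sq_to_K]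
  norm_cast

private lemma aux_norm_sq_le [CompleteSpace H] {P : H →L[ℂ] H} (hsa : IsSelfAdjoint P)
    (hid : ∀ y, P (P y) = P y) (x : H) : ‖P x‖ ^ 2 ≤ ‖x‖ ^ 2 := by
  have h := aux_inner hsa hid x
  have hcs := norm_inner_le_norm (𝕜 := ℂ) x (P x)
  rw [h] at hcs
  have h2 : ‖((‖P x‖ ^ 2 : ℝ) : ℂ)‖ = ‖P x‖ ^ 2 := by
    rw [Complex.norm_real]
    exact abs_of_nonneg (by positivity)
  rw [h2] at hcs
  nlinarith [norm_nonneg (P x), norm_nonneg x, sq_nonneg (‖x‖ - ‖P x‖)]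

private lemma aux_eq_of_norm [CompleteSpace H] {P : H →L[ℂ] H} (hsa : IsSelfAdjoint P)
    (hid : ∀ y, P (P y) = P y) (x : H) (h : ‖P x‖ ^ 2 = ‖x‖ ^ 2) : P x = x := by
  have hx := aux_inner hsa hid x
  have hyx : ⟪P x, x⟫ = ((‖P x‖ ^ 2 : ℝ) : ℂ) := by
    rw [← inner_conj_symm, hx, Complex.conj_ofReal]
  have hss : ∀ y : H, ⟪y, y⟫ = ((‖y‖ ^ 2 : ℝ) : ℂ) := fun y => by
    rw [inner_self_eq_norm_sq_to_K]; norm_cast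
  have h1 : ⟪x - P x, x - P x⟫ = 0 := by
    rw [inner_sub_sub_self, hx, hyx, hss, hss, h]
    ring
  have h2 : x - P x = 0 := inner_self_eq_zero.mp h1
  exact (sub_eq_zero.mp h2).symm

private lemma aux_pair {p q : H →L[ℂ] H}
    (hp : ∀ y, p (p y) = p y) (hq : ∀ y, q (q y) = q y)
    (a b lam : ℂ) (x : H) (hx : a • p x + b • q x = lam • x) :
    a • p (a • p (p x) + b • q (p x) - lam • p x)
      + b • q (a • p (p x) + b • q (p x) - lam • p x)
    = (a + b - lam) • (a • p (p x) + b • q (p x) - lam • p x) := by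
  have key : a • p (a • p (p x) + b • q (p x)) + b • q (a • p (p x) + b • q (p x))
        - (a + b) • (a • p (p x) + b • q (p x))
      = p (a • p (a • p x + b • q x) + b • q (a • p x + b • q x))
        - (a + b) • p (a • p x + b • q x) := by
    simp only [map_add, map_smul, hp, hq]
    module
  have hAAx : p (a • p (a • p x + b • q x) + b • q (a • p x + b • q x))
        - (a + b) • p (a • p x + b • q x)
      = (lam * lam - (a + b) * lam) • p x := by
    rw [hx]
    simp only [map_smul]
    rw [smul_comm a lam (p x), smul_comm b lam (q x), ← smul_add, hx]
    simp only [map_smul]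
    module
  have kt0 := key.trans hAAx
  have kt : (a * b) • p (q (p x)) = ((a - lam) * (b - lam)) • p x := by
    simp only [map_add, map_smul, hp, hq] at kt0
    linear_combination (norm := module) kt0
  simp only [map_add, map_smul, map_sub, hp, hq]
  linear_combination (norm := module) kt

end Stmt16Aux

/-- The poset `a₈` (an incomparable pair `g₁, g₂` with `g₅` above both
and `g₆` below both, together with incomparable `g₃, g₄`) has no essential irreducible
orthoscalar representation: for any irreducible orthoscalar representation some
projection is `0` or `I`, or two projections at comparable elements coincide.
(Indices: `P 0, …, P 5` stand for `P₁, …, P₆`.) -/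
theorem stmt_16 {H : Type*} [NormedAddCommGroup H] [InnerProductSpace ℂ H]
    [CompleteSpace H]
    (P : Fin 6 → H →L[ℂ] H)
    (hproj : ∀ i, IsSelfAdjoint (P i) ∧ P i ∘L P i = P i)
    (h61 : P 5 ∘L P 0 = P 5) (h62 : P 5 ∘L P 1 = P 5)
    (h15 : P 0 ∘L P 4 = P 0) (h25 : P 1 ∘L P 4 = P 1)
    (α : Fin 6 → ℝ) (hα : ∀ i, 0 < α i ∧ α i < 1)
    (horth : ∑ i, (α i : ℂ) • P i = 1)
    (hirr : ∀ K : Submodule ℂ H, IsClosed (K : Set H) →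
      (∀ i, ∀ x ∈ K, P i x ∈ K) → K = ⊥ ∨ K = ⊤) :
    (∃ i, P i = 0 ∨ P i = 1) ∨
    P 5 = P 0 ∨ P 5 = P 1 ∨ P 0 = P 4 ∨ P 1 = P 4 := by
  classical
  have hsa : ∀ i, IsSelfAdjoint (P i) := fun i => (hproj i).1
  have hidv : ∀ (i : Fin 6) (y : H), P i (P i y) = P i y := fun i y => by
    have := congrArg (fun f : H →L[ℂ] H => f y) (hproj i).2
    simpa using this
  have star_rel : ∀ {i j : Fin 6}, P i ∘L P j = P i → P j ∘L P i = P i := by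
    intro i j hij
    have := congrArg ContinuousLinearMap.adjoint hij
    rwa [ContinuousLinearMap.adjoint_comp, (hsa i).adjoint_eq, (hsa j).adjoint_eq] at this
  have h54 : P 5 ∘L P 4 = P 5 := by
    calc P 5 ∘L P 4 = (P 5 ∘L P 0) ∘L P 4 := by rw [h61]
    _ = P 5 ∘L (P 0 ∘L P 4) := (ContinuousLinearMap.comp_assoc _ _ _)
    _ = P 5 ∘L P 0 := by rw [h15]
    _ = P 5 := h61
  have vap : ∀ {i j k : Fin 6}, P i ∘L P j = P k → ∀ y, P i (P j y) = P k y := by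
    intro i j k hij y
    have := congrArg (fun f : H →L[ℂ] H => f y) hij
    simpa using this
  -- vector versions of the order relations
  have v05 : ∀ y, P 0 (P 5 y) = P 5 y := vap (star_rel h61)
  have v15 : ∀ y, P 1 (P 5 y) = P 5 y := vap (star_rel h62)
  have v45 : ∀ y, P 4 (P 5 y) = P 5 y := vap (star_rel h54)
  have v04 : ∀ y, P 0 (P 4 y) = P 0 y := vap h15
  have v14 : ∀ y, P 1 (P 4 y) = P 1 y := vap h25
  have v54 : ∀ y, P 5 (P 4 y) = P 5 y := vap h54
  -- the operator A = α₃ P₂ + α₄ P₃ (free projections)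
  set Aop : H →L[ℂ] H := (α 2 : ℂ) • P 2 + (α 3 : ℂ) • P 3 with hAopdef
  have hAv : ∀ y : H, Aop y = (α 2 : ℂ) • P 2 y + (α 3 : ℂ) • P 3 y := fun y => by
    rw [hAopdef]; simp
  -- the orthoscalarity identity, applied to a vector
  have happ : ∀ x : H,
      (α 0 : ℂ) • P 0 x + (α 1 : ℂ) • P 1 x + (α 2 : ℂ) • P 2 x + (α 3 : ℂ) • P 3 x
        + (α 4 : ℂ) • P 4 x + (α 5 : ℂ) • P 5 x = x := by
    intro x
    have := congrArg (fun T : H →L[ℂ] H => T x) horth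
    simpa [Fin.sum_univ_six] using this
  have hinner : ∀ (i : Fin 6) (x : H), ⟪x, P i x⟫ = ((‖P i x‖ ^ 2 : ℝ) : ℂ) :=
    fun i x => aux_inner (hsa i) (hidv i) x
  have hle : ∀ (i : Fin 6) (x : H), ‖P i x‖ ^ 2 ≤ ‖x‖ ^ 2 :=
    fun i x => aux_norm_sq_le (hsa i) (hidv i) x
  have heq : ∀ (i : Fin 6) (x : H), ‖P i x‖ ^ 2 = ‖x‖ ^ 2 → P i x = x :=
    fun i x h => aux_eq_of_norm (hsa i) (hidv i) x h
  have hss : ∀ y : H, ⟪y, y⟫ = ((‖y‖ ^ 2 : ℝ) : ℂ) := fun y => by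
    rw [inner_self_eq_norm_sq_to_K]; norm_cast
  -- real form of orthoscalarity
  have hreal : ∀ x : H,
      α 0 * ‖P 0 x‖ ^ 2 + α 1 * ‖P 1 x‖ ^ 2 + α 2 * ‖P 2 x‖ ^ 2 + α 3 * ‖P 3 x‖ ^ 2
        + α 4 * ‖P 4 x‖ ^ 2 + α 5 * ‖P 5 x‖ ^ 2 = ‖x‖ ^ 2 := by
    intro x
    have h := congrArg (fun y : H => ⟪x, y⟫) (happ x)
    simp only [inner_add_right, inner_smul_right, hinner, hss] at h
    exact_mod_cast h
  -- eigenvalue extraction for A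
  have hAeig : ∀ (r : ℝ) (v : H), Aop v = ((r : ℝ) : ℂ) • v →
      α 2 * ‖P 2 v‖ ^ 2 + α 3 * ‖P 3 v‖ ^ 2 = r * ‖v‖ ^ 2 := by
    intro r v hv
    have hx' : (α 2 : ℂ) • P 2 v + (α 3 : ℂ) • P 3 v = ((r : ℝ) : ℂ) • v := by
      rw [← hAv]; exact hv
    have h := congrArg (fun y : H => ⟪v, y⟫) hx'
    simp only [inner_add_right, inner_smul_right, hinner, hss] at h
    exact_mod_cast h
  have hBside : ∀ (r : ℝ) (v : H), Aop v = ((r : ℝ) : ℂ) • v →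
      α 0 * ‖P 0 v‖ ^ 2 + α 1 * ‖P 1 v‖ ^ 2 + α 4 * ‖P 4 v‖ ^ 2 + α 5 * ‖P 5 v‖ ^ 2
        = (1 - r) * ‖v‖ ^ 2 := by
    intro r v hv
    have h1 := hreal v
    have h2 := hAeig r v hv
    linarith
  -- vanishing of eigenspaces of A outside [1-c, 1]
  have hvan_lo : ∀ (r : ℝ), r < 1 - (α 0 + α 1 + α 4 + α 5) → ∀ v : H,
      Aop v = ((r : ℝ) : ℂ) • v → v = 0 := by
    intro r hr v hv
    by_contra hne
    have ht : 0 < ‖v‖ ^ 2 := pow_pos (norm_pos_iff.mpr hne) 2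
    have hb := hBside r v hv
    have b0 : α 0 * ‖P 0 v‖ ^ 2 ≤ α 0 * ‖v‖ ^ 2 :=
      mul_le_mul_of_nonneg_left (hle 0 v) (hα 0).1.le
    have b1 : α 1 * ‖P 1 v‖ ^ 2 ≤ α 1 * ‖v‖ ^ 2 :=
      mul_le_mul_of_nonneg_left (hle 1 v) (hα 1).1.le
    have b4 : α 4 * ‖P 4 v‖ ^ 2 ≤ α 4 * ‖v‖ ^ 2 :=
      mul_le_mul_of_nonneg_left (hle 4 v) (hα 4).1.le
    have b5 : α 5 * ‖P 5 v‖ ^ 2 ≤ α 5 * ‖v‖ ^ 2 :=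
      mul_le_mul_of_nonneg_left (hle 5 v) (hα 5).1.le
    nlinarith [mul_pos (sub_pos.2 hr) ht]
  have hvan_hi : ∀ (r : ℝ), 1 < r → ∀ v : H,
      Aop v = ((r : ℝ) : ℂ) • v → v = 0 := by
    intro r hr v hv
    by_contra hne
    have ht : 0 < ‖v‖ ^ 2 := pow_pos (norm_pos_iff.mpr hne) 2
    have hb := hBside r v hv
    have b0 : 0 ≤ α 0 * ‖P 0 v‖ ^ 2 := mul_nonneg (hα 0).1.le (sq_nonneg _)
    have b1 : 0 ≤ α 1 * ‖P 1 v‖ ^ 2 := mul_nonneg (hα 1).1.le (sq_nonneg _)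
    have b4 : 0 ≤ α 4 * ‖P 4 v‖ ^ 2 := mul_nonneg (hα 4).1.le (sq_nonneg _)
    have b5 : 0 ≤ α 5 * ‖P 5 v‖ ^ 2 := mul_nonneg (hα 5).1.le (sq_nonneg _)
    nlinarith [mul_pos (sub_pos.2 hr) ht]
  -- fixed vectors of P5 behave like (1-c)-eigenvectors of A
  have extRan5 : ∀ x : H, Aop (P 5 x) = ((1 - (α 0 + α 1 + α 4 + α 5) : ℝ) : ℂ) • P 5 x := by
    intro x
    have h5 : P 5 (P 5 x) = P 5 x := hidv 5 x
    have h0 : P 0 (P 5 x) = P 5 x := v05 x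
    have h1 : P 1 (P 5 x) = P 5 x := v15 x
    have h4 : P 4 (P 5 x) = P 5 x := v45 x
    have h := happ (P 5 x)
    rw [h0, h1, h4, h5] at h
    rw [hAv]
    have hc : ((1 - (α 0 + α 1 + α 4 + α 5) : ℝ) : ℂ)
        = 1 - ((α 0 : ℂ) + (α 1 : ℂ) + (α 4 : ℂ) + (α 5 : ℂ)) := by push_cast; ring
    rw [hc]
    linear_combination (norm := module) h
  -- vectors in the kernel of P4 are fixed by A
  have extKer4 : ∀ z : H, P 4 z = 0 → Aop z = z := by
    intro z hz
    have h0 : P 0 z = 0 := by rw [← v04 z, hz, map_zero]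
    have h1 : P 1 z = 0 := by rw [← v14 z, hz, map_zero]
    have h5 : P 5 z = 0 := by rw [← v54 z, hz, map_zero]
    have h := happ z
    rw [h0, h1, h5, hz] at h
    rw [hAv]
    linear_combination (norm := module) h
  -- extraction from an A-eigenvector at eigenvalue 1
  have ext1 : ∀ v : H, Aop v = v →
      P 0 v = 0 ∧ P 1 v = 0 ∧ P 4 v = 0 ∧ P 5 v = 0 := by
    intro v hv
    have hv' : Aop v = ((1 : ℝ) : ℂ) • v := by rw [hv]; norm_num
    have hb := hBside 1 v hv'
    have b0 : 0 ≤ α 0 * ‖P 0 v‖ ^ 2 := mul_nonneg (hα 0).1.le (sq_nonneg _)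
    have b1 : 0 ≤ α 1 * ‖P 1 v‖ ^ 2 := mul_nonneg (hα 1).1.le (sq_nonneg _)
    have b4 : 0 ≤ α 4 * ‖P 4 v‖ ^ 2 := mul_nonneg (hα 4).1.le (sq_nonneg _)
    have b5 : 0 ≤ α 5 * ‖P 5 v‖ ^ 2 := mul_nonneg (hα 5).1.le (sq_nonneg _)
    have hz : ∀ (i : Fin 6), α i * ‖P i v‖ ^ 2 = 0 → P i v = 0 := by
      intro i hi
      rcases mul_eq_zero.mp hi with h | h
      · exact absurd h (ne_of_gt (hα i).1)
      · exact norm_eq_zero.mp (pow_eq_zero_iff two_ne_zero |>.mp h)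
    refine ⟨hz 0 (by linarith), hz 1 (by linarith), hz 4 (by linarith), hz 5 (by linarith)⟩
  -- extraction from an A-eigenvector at eigenvalue 1-c
  have ext2 : ∀ v : H, Aop v = ((1 - (α 0 + α 1 + α 4 + α 5) : ℝ) : ℂ) • v →
      P 0 v = v ∧ P 1 v = v ∧ P 4 v = v ∧ P 5 v = v := by
    intro v hv
    have hb := hBside (1 - (α 0 + α 1 + α 4 + α 5)) v hv
    have b0 : α 0 * ‖P 0 v‖ ^ 2 ≤ α 0 * ‖v‖ ^ 2 :=
      mul_le_mul_of_nonneg_left (hle 0 v) (hα 0).1.le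
    have b1 : α 1 * ‖P 1 v‖ ^ 2 ≤ α 1 * ‖v‖ ^ 2 :=
      mul_le_mul_of_nonneg_left (hle 1 v) (hα 1).1.le
    have b4 : α 4 * ‖P 4 v‖ ^ 2 ≤ α 4 * ‖v‖ ^ 2 :=
      mul_le_mul_of_nonneg_left (hle 4 v) (hα 4).1.le
    have b5 : α 5 * ‖P 5 v‖ ^ 2 ≤ α 5 * ‖v‖ ^ 2 :=
      mul_le_mul_of_nonneg_left (hle 5 v) (hα 5).1.le
    have he : ∀ (i : Fin 6), α i * ‖P i v‖ ^ 2 = α i * ‖v‖ ^ 2 → P i v = v := by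
      intro i hi
      exact heq i v (mul_left_cancel₀ (ne_of_gt (hα i).1) hi)
    refine ⟨he 0 (by linarith), he 1 (by linarith), he 4 (by linarith), he 5 (by linarith)⟩
  -- the pairing step for P 2 and P 3
  have pair2 : ∀ (lam : ℂ) (x : H), Aop x = lam • x →
      Aop (Aop (P 2 x) - lam • P 2 x)
        = ((α 2 : ℂ) + (α 3 : ℂ) - lam) • (Aop (P 2 x) - lam • P 2 x) := by
    intro lam x hx
    have hx' : (α 2 : ℂ) • P 2 x + (α 3 : ℂ) • P 3 x = lam • x := by rw [← hAv]; exact hx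
    have h := aux_pair (hidv 2) (hidv 3) (α 2 : ℂ) (α 3 : ℂ) lam x hx'
    simp only [hAv]
    exact h
  have pair3 : ∀ (lam : ℂ) (x : H), Aop x = lam • x →
      Aop (Aop (P 3 x) - lam • P 3 x)
        = ((α 2 : ℂ) + (α 3 : ℂ) - lam) • (Aop (P 3 x) - lam • P 3 x) := by
    intro lam x hx
    have hx' : (α 3 : ℂ) • P 3 x + (α 2 : ℂ) • P 2 x = lam • x := by
      rw [add_comm, ← hAv]; exact hx
    have h := aux_pair (hidv 3) (hidv 2) (α 3 : ℂ) (α 2 : ℂ) lam x hx'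
    have hV : (α 3 : ℂ) • P 3 (P 3 x) + (α 2 : ℂ) • P 2 (P 3 x) - lam • P 3 x
        = (α 2 : ℂ) • P 2 (P 3 x) + (α 3 : ℂ) • P 3 (P 3 x) - lam • P 3 x := by module
    rw [hV] at h
    simp only [hAv]
    linear_combination (norm := module) h
  -- Trichotomy on the total weight
  rcases lt_trichotomy (α 0 + α 1 + α 2 + α 3 + α 4 + α 5) 2 with hT | hT | hT
  · -- CASE I : total weight < 2.  Use the eigenspace of A at 1.
    set E1 : Submodule ℂ H := LinearMap.ker ((Aop - 1 : H →L[ℂ] H) : H →ₗ[ℂ] H) with hE1def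
    have hmem : ∀ x : H, x ∈ E1 ↔ Aop x = x := by
      intro x
      rw [hE1def, LinearMap.mem_ker]
      simp [ContinuousLinearMap.sub_apply, sub_eq_zero]
    have hclosed : IsClosed (E1 : Set H) := ContinuousLinearMap.isClosed_ker _
    have hinv : ∀ i, ∀ x ∈ E1, P i x ∈ E1 := by
      intro i x hx
      have hAx : Aop x = x := (hmem x).mp hx
      have hx0 := ext1 x hAx
      have hzero : (0 : H) ∈ E1 := E1.zero_mem
      have hpair : ∀ j : Fin 6, (∀ (lam : ℂ) (y : H), Aop y = lam • y →
            Aop (Aop (P j y) - lam • P j y)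
              = ((α 2 : ℂ) + (α 3 : ℂ) - lam) • (Aop (P j y) - lam • P j y)) →
          P j x ∈ E1 := by
        intro j hp
        have h2 := hp 1 x (by rw [one_smul]; exact hAx)
        have hcast : (α 2 : ℂ) + (α 3 : ℂ) - 1 = ((α 2 + α 3 - 1 : ℝ) : ℂ) := by
          push_cast; ring
        have h3 : Aop (P j x) - (1 : ℂ) • P j x = 0 := by
          apply hvan_lo (α 2 + α 3 - 1) (by linarith)
          rw [← hcast]; exact h2
        rw [one_smul] at h3
        exact (hmem _).mpr (sub_eq_zero.mp h3)
      fin_cases i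
      · show P 0 x ∈ E1; rw [hx0.1]; exact hzero
      · show P 1 x ∈ E1; rw [hx0.2.1]; exact hzero
      · show P 2 x ∈ E1; exact hpair 2 pair2
      · show P 3 x ∈ E1; exact hpair 3 pair3
      · show P 4 x ∈ E1; rw [hx0.2.2.1]; exact hzero
      · show P 5 x ∈ E1; rw [hx0.2.2.2]; exact hzero
    rcases hirr E1 hclosed hinv with hbot | htop
    · refine Or.inl ⟨4, Or.inr ?_⟩
      ext x
      have hz4 : P 4 (x - P 4 x) = 0 := by rw [map_sub, hidv 4, sub_self]
      have hzK : x - P 4 x ∈ E1 := (hmem _).mpr (extKer4 _ hz4)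
      have h0 := (Submodule.eq_bot_iff E1).mp hbot _ hzK
      have hx4 : P 4 x = x := (sub_eq_zero.mp h0).symm
      simpa using hx4
    · refine Or.inl ⟨4, Or.inl ?_⟩
      ext x
      have hx : x ∈ E1 := htop ▸ Submodule.mem_top
      have h := ext1 x ((hmem x).mp hx)
      simpa using h.2.2.1
  · -- CASE III : total weight = 2.
    set ci : ℂ := ((α 0 + α 1 + α 4 + α 5 : ℝ) : ℂ) with hcidef
    set lam : ℂ := 1 - ci with hlamdef
    have hlamcast : lam = ((1 - (α 0 + α 1 + α 4 + α 5) : ℝ) : ℂ) := by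
      rw [hlamdef, hcidef]; push_cast; ring
    have hsum2 : ((α 2 : ℂ) + (α 3 : ℂ)) + ci = 2 := by
      rw [hcidef]
      have hr : α 2 + α 3 + (α 0 + α 1 + α 4 + α 5) = 2 := by linarith
      have := congrArg (fun t : ℝ => (t : ℂ)) hr
      push_cast at this ⊢
      linear_combination this
    have hcpos : (0 : ℝ) < α 0 + α 1 + α 4 + α 5 := by
      have := (hα 0).1; have := (hα 1).1; have := (hα 4).1; have := (hα 5).1
      linarith
    have hcne : ci ≠ 0 := by
      rw [hcidef]
      exact Complex.ofReal_ne_zero.mpr (ne_of_gt hcpos)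
    set F : H →L[ℂ] H := (Aop - 1) ∘L (Aop - lam • 1) with hFdef
    set Kd : Submodule ℂ H := LinearMap.ker (F : H →ₗ[ℂ] H) with hKddef
    have hclosed : IsClosed (Kd : Set H) := ContinuousLinearMap.isClosed_ker _
    have hmem : ∀ x : H, x ∈ Kd ↔ Aop (Aop x - lam • x) = Aop x - lam • x := by
      intro x
      rw [hKddef, LinearMap.mem_ker, hFdef]
      simp only [ContinuousLinearMap.coe_coe, ContinuousLinearMap.comp_apply, ContinuousLinearMap.sub_apply,
        ContinuousLinearMap.smul_apply, ContinuousLinearMap.one_apply, sub_eq_zero]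
    have decomp : ∀ x ∈ Kd, ∃ u v : H, x = u + v ∧ Aop u = u ∧ Aop v = lam • v := by
      intro x hx
      have hxm := (hmem x).mp hx
      set u : H := ci⁻¹ • (Aop x - lam • x) with hudef
      have hu : Aop u = u := by
        rw [hudef, map_smul, hxm]
      refine ⟨u, x - u, by abel, hu, ?_⟩
      have h1 : ci • u = Aop x - lam • x := by
        rw [hudef, smul_smul, mul_inv_cancel₀ hcne, one_smul]
      rw [map_sub, hu, hlamdef]
      rw [hlamdef] at h1
      linear_combination (norm := module) -h1
    have hinv : ∀ i, ∀ x ∈ Kd, P i x ∈ Kd := by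
      intro i x hx
      obtain ⟨u, v, hxuv, hu, hv⟩ := decomp x hx
      have hu4 := ext1 u hu
      have hv4 := ext2 v (by rw [← hlamcast]; exact hv)
      have hvK : v ∈ Kd := by
        rw [hmem]
        have h0 : Aop v - lam • v = 0 := by rw [hv, sub_self]
        rw [h0, map_zero]
      have hmemP : ∀ j : Fin 6, P j u = 0 → P j v = v → P j x ∈ Kd := by
        intro j hju hjv
        have : P j x = v := by rw [hxuv, map_add, hju, hjv, zero_add]
        rw [this]; exact hvK
      have hKu : ∀ j : Fin 6, (∀ (lam' : ℂ) (y : H), Aop y = lam' • y →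
            Aop (Aop (P j y) - lam' • P j y)
              = ((α 2 : ℂ) + (α 3 : ℂ) - lam') • (Aop (P j y) - lam' • P j y)) →
          P j u ∈ Kd := by
        intro j hpair
        have h2 := hpair 1 u (by rw [one_smul]; exact hu)
        have hco : (α 2 : ℂ) + (α 3 : ℂ) - 1 = lam := by
          rw [hlamdef]; linear_combination hsum2
        rw [hco, one_smul] at h2
        rw [hmem]
        have e1 : Aop (Aop (P j u) - lam • P j u)
            = Aop (Aop (P j u)) - lam • Aop (P j u) := by rw [map_sub, map_smul]
        have e2 : Aop (Aop (P j u) - P j u)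
            = Aop (Aop (P j u)) - Aop (P j u) := by rw [map_sub]
        rw [e2] at h2
        rw [e1]
        linear_combination (norm := module) h2
      have hKv : ∀ j : Fin 6, (∀ (lam' : ℂ) (y : H), Aop y = lam' • y →
            Aop (Aop (P j y) - lam' • P j y)
              = ((α 2 : ℂ) + (α 3 : ℂ) - lam') • (Aop (P j y) - lam' • P j y)) →
          P j v ∈ Kd := by
        intro j hpair
        have h2 := hpair lam v hv
        have hco : (α 2 : ℂ) + (α 3 : ℂ) - lam = 1 := by
          rw [hlamdef]; linear_combination hsum2
        rw [hco, one_smul] at h2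
        rw [hmem]
        exact h2
      fin_cases i
      · show P 0 x ∈ Kd; exact hmemP 0 hu4.1 hv4.1
      · show P 1 x ∈ Kd; exact hmemP 1 hu4.2.1 hv4.2.1
      · show P 2 x ∈ Kd; rw [hxuv, map_add]; exact Kd.add_mem (hKu 2 pair2) (hKv 2 pair2)
      · show P 3 x ∈ Kd; rw [hxuv, map_add]; exact Kd.add_mem (hKu 3 pair3) (hKv 3 pair3)
      · show P 4 x ∈ Kd; exact hmemP 4 hu4.2.2.1 hv4.2.2.1
      · show P 5 x ∈ Kd; exact hmemP 5 hu4.2.2.2 hv4.2.2.2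
    rcases hirr Kd hclosed hinv with hbot | htop
    · refine Or.inl ⟨4, Or.inr ?_⟩
      ext x
      have hz4 : P 4 (x - P 4 x) = 0 := by rw [map_sub, hidv 4, sub_self]
      have hA1 : Aop (x - P 4 x) = x - P 4 x := extKer4 _ hz4
      have hzK : x - P 4 x ∈ Kd := by
        rw [hmem]
        have h0 : Aop (x - P 4 x) - lam • (x - P 4 x) = (1 - lam) • (x - P 4 x) := by
          rw [hA1]; module
        rw [h0, map_smul, hA1]
      have h0 := (Submodule.eq_bot_iff Kd).mp hbot _ hzK
      have hx4 : P 4 x = x := (sub_eq_zero.mp h0).symm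
      simpa using hx4
    · refine Or.inr (Or.inr (Or.inr (Or.inl ?_)))
      ext x
      have hx : x ∈ Kd := htop ▸ Submodule.mem_top
      obtain ⟨u, v, hxuv, hu, hv⟩ := decomp x hx
      have hu4 := ext1 u hu
      have hv4 := ext2 v (by rw [← hlamcast]; exact hv)
      have h0 : P 0 x = v := by rw [hxuv, map_add, hu4.1, hv4.1, zero_add]
      have h4 : P 4 x = v := by rw [hxuv, map_add, hu4.2.2.1, hv4.2.2.1, zero_add]
      rw [h0, h4]
  · -- CASE II : total weight > 2.  Use the eigenspace of A at 1 - c.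
    set lam : ℂ := ((1 - (α 0 + α 1 + α 4 + α 5) : ℝ) : ℂ) with hlamdef
    set E2 : Submodule ℂ H := LinearMap.ker ((Aop - lam • 1 : H →L[ℂ] H) : H →ₗ[ℂ] H) with hE2def
    have hmem : ∀ x : H, x ∈ E2 ↔ Aop x = lam • x := by
      intro x
      rw [hE2def, LinearMap.mem_ker]
      simp [ContinuousLinearMap.sub_apply, ContinuousLinearMap.smul_apply,
        ContinuousLinearMap.one_apply, sub_eq_zero]
    have hclosed : IsClosed (E2 : Set H) := ContinuousLinearMap.isClosed_ker _
    have hinv : ∀ i, ∀ x ∈ E2, P i x ∈ E2 := by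
      intro i x hx
      have hAx : Aop x = lam • x := (hmem x).mp hx
      have hx2 := ext2 x hAx
      have hfix : ∀ j : Fin 6, P j x = x → P j x ∈ E2 := by
        intro j hj; rw [hj]; exact hx
      have hpair : ∀ j : Fin 6, (∀ (lam' : ℂ) (y : H), Aop y = lam' • y →
            Aop (Aop (P j y) - lam' • P j y)
              = ((α 2 : ℂ) + (α 3 : ℂ) - lam') • (Aop (P j y) - lam' • P j y)) →
          P j x ∈ E2 := by
        intro j hp
        have h2 := hp lam x hAx
        have hcast : (α 2 : ℂ) + (α 3 : ℂ) - lam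
            = ((α 2 + α 3 - 1 + (α 0 + α 1 + α 4 + α 5) : ℝ) : ℂ) := by
          rw [hlamdef]; push_cast; ring
        have h3 : Aop (P j x) - lam • P j x = 0 := by
          apply hvan_hi (α 2 + α 3 - 1 + (α 0 + α 1 + α 4 + α 5)) (by linarith)
          rw [← hcast]; exact h2
        exact (hmem _).mpr (sub_eq_zero.mp h3)
      fin_cases i
      · show P 0 x ∈ E2; exact hfix 0 hx2.1
      · show P 1 x ∈ E2; exact hfix 1 hx2.2.1
      · show P 2 x ∈ E2; exact hpair 2 pair2
      · show P 3 x ∈ E2; exact hpair 3 pair3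
      · show P 4 x ∈ E2; exact hfix 4 hx2.2.2.1
      · show P 5 x ∈ E2; exact hfix 5 hx2.2.2.2
    rcases hirr E2 hclosed hinv with hbot | htop
    · refine Or.inl ⟨5, Or.inl ?_⟩
      ext x
      have hz : P 5 x ∈ E2 := (hmem _).mpr (extRan5 x)
      have h0 := (Submodule.eq_bot_iff E2).mp hbot _ hz
      simpa using h0
    · refine Or.inl ⟨5, Or.inr ?_⟩
      ext x
      have hx : x ∈ E2 := htop ▸ Submodule.mem_top
      have h := ext2 x ((hmem x).mp hx)
      simpa using h.2.2.2
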